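/- Let m and n be odd positive natural numbers. The complete bipartite graph K_{m,n} is Perrin cordial if one of the following holds: m+n ≤ 28 when m+n ≡ 0 (mod 7); m+n ≤ 22 when m+n ≡ 1 (mod 7); m+n ≤ 30 when m+n ≡ 2 (mod 7); m+n ≤ 38 when m+n ≡ 3 (mod 7); m+n ≤ 32 when m+n ≡ 4 (mod 7); m+n ≤ 40 when m+n ≡ 5 (mod 7); m+n ≤ 34 when m+n ≡ 6 (mod 7). -/
import Mathlib

open Finset

/-- The reindexed Perrin sequence: `P 0 = 0`, `P 1 = 3`, `P 2 = 0`, `P 3 = 2`,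
and `P n = P (n-2) + P (n-3)` thereafter
(so `P 4 = 3`, `P 5 = 2`, `P 6 = 5`, ...). -/
def perrin : ℕ → ℕ
  | 0 => 0
  | 1 => 3
  | 2 => 0
  | 3 => 2
  | n + 4 => perrin (n + 2) + perrin (n + 1)

/-- The induced edge label: `f` assigns to each vertex the index of a Perrin number,
and an edge `uv` gets the label `(P (f u) + P (f v)) mod 2`. -/
def perrinEdgeLabel {V : Type*} (f : V → ℕ) : Sym2 V → ℕ :=
  Sym2.lift ⟨fun u v => (perrin (f u) + perrin (f v)) % 2, fun u v => by simp [Nat.add_comm]⟩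

/-- `eCount G f i` is the number of edges of `G` whose induced label under `f` is `i`. -/
noncomputable def eCount {V : Type*} (G : SimpleGraph V) (f : V → ℕ) (i : ℕ) : ℕ :=
  {e | e ∈ G.edgeSet ∧ perrinEdgeLabel f e = i}.ncard

/-- A finite simple graph `G` on `N` vertices is Perrin cordial if there is an injective
labeling of its vertices by indices in `{0, 1, ..., N}` such that the numbers of edges
with induced label `0` and `1` differ by at most `1`. -/
def IsPerrinCordial {V : Type*} [Fintype V] (G : SimpleGraph V) : Prop :=
  ∃ f : V → Fin (Fintype.card V + 1), Function.Injective f ∧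
    |(eCount G (fun v => (f v : ℕ)) 0 : ℤ) - (eCount G (fun v => (f v : ℕ)) 1 : ℤ)| ≤ 1

lemma eCount_eq (m n : ℕ) (f : Fin m ⊕ Fin n → ℕ) (i : ℕ) :
    eCount (completeBipartiteGraph (Fin m) (Fin n)) f i
      = ((univ : Finset (Fin m × Fin n)).filter
          (fun ab => (perrin (f (.inl ab.1)) + perrin (f (.inr ab.2))) % 2 = i)).card := by
  classical
  have hinj : Function.Injective
      (fun ab : Fin m × Fin n => s(Sum.inl ab.1, (Sum.inr ab.2 : Fin m ⊕ Fin n))) := by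
    rintro ⟨a, b⟩ ⟨a', b'⟩ h
    simp only [Sym2.eq_iff] at h
    rcases h with ⟨h1, h2⟩ | ⟨h1, h2⟩ <;> simp_all
  have hset : {e | e ∈ (completeBipartiteGraph (Fin m) (Fin n)).edgeSet ∧ perrinEdgeLabel f e = i}
      = (fun ab : Fin m × Fin n => s(Sum.inl ab.1, (Sum.inr ab.2 : Fin m ⊕ Fin n))) ''
        ((univ : Finset (Fin m × Fin n)).filter
          (fun ab => (perrin (f (.inl ab.1)) + perrin (f (.inr ab.2))) % 2 = i) : Finset _) := by
    ext e
    induction e using Sym2.ind with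
    | _ u v =>
      simp only [Set.mem_setOf_eq, SimpleGraph.mem_edgeSet, completeBipartiteGraph_adj,
        Set.mem_image, Finset.coe_filter, Set.mem_setOf_eq, Finset.mem_univ, true_and]
      constructor
      · rintro ⟨hadj, hlab⟩
        rcases u with a | b <;> rcases v with a' | b'
        · simp at hadj
        · exact ⟨⟨a, b'⟩, by simpa [perrinEdgeLabel] using hlab, rfl⟩
        · refine ⟨⟨a', b⟩, ?_, ?_⟩
          · simpa [perrinEdgeLabel, Nat.add_comm] using hlab
          · exact Sym2.eq_swap
        · simp at hadj
      · rintro ⟨⟨a, b⟩, hcond, he⟩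
        rw [Sym2.eq_iff] at he
        rcases he with ⟨h1, h2⟩ | ⟨h1, h2⟩ <;> subst h1 <;> subst h2
        · exact ⟨by simp, by simpa [perrinEdgeLabel] using hcond⟩
        · exact ⟨by simp, by simpa [perrinEdgeLabel, Nat.add_comm] using hcond⟩
  rw [eCount, hset, Set.ncard_image_of_injective _ hinj, Set.ncard_coe_finset]

lemma pair_count {m n : ℕ} (gA : Fin m → ℕ) (gB : Fin n → ℕ)
    (hA : ∀ a, gA a ≤ 1) (hB : ∀ b, gB b ≤ 1) :
    ((univ : Finset (Fin m × Fin n)).filter (fun ab => gA ab.1 = gB ab.2)).card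
      = (univ.filter (fun a => gA a = 0)).card * (univ.filter (fun b => gB b = 0)).card
        + (univ.filter (fun a => gA a = 1)).card * (univ.filter (fun b => gB b = 1)).card
    ∧ ((univ : Finset (Fin m × Fin n)).filter (fun ab => gA ab.1 ≠ gB ab.2)).card
      = (univ.filter (fun a => gA a = 0)).card * (univ.filter (fun b => gB b = 1)).card
        + (univ.filter (fun a => gA a = 1)).card * (univ.filter (fun b => gB b = 0)).card := by
  classical
  have key : ∀ (i j : ℕ),
      ((univ : Finset (Fin m × Fin n)).filter (fun ab => gA ab.1 = i ∧ gB ab.2 = j)).card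
        = (univ.filter (fun a => gA a = i)).card * (univ.filter (fun b => gB b = j)).card := by
    intro i j
    rw [← Finset.card_product, ← Finset.filter_product]
    congr 1
  constructor
  · rw [← key 0 0, ← key 1 1, ← Finset.card_union_of_disjoint]
    · congr 1
      ext ⟨a, b⟩
      simp only [mem_union, mem_filter, mem_univ, true_and]
      have := hA a; have := hB b; omega
    · rw [Finset.disjoint_filter]
      rintro ⟨a, b⟩ _ ⟨h1, h2⟩ ⟨h3, h4⟩
      omega
  · rw [← key 0 1, ← key 1 0, ← Finset.card_union_of_disjoint]
    · congr 1
      ext ⟨a, b⟩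
      simp only [mem_union, mem_filter, mem_univ, true_and]
      have := hA a; have := hB b; omega
    · rw [Finset.disjoint_filter]
      rintro ⟨a, b⟩ _ ⟨h1, h2⟩ ⟨h3, h4⟩
      omega

lemma card_filter_val_lt (m a0 : ℕ) (h : a0 ≤ m) :
    ((univ : Finset (Fin m)).filter (fun a => a.val < a0)).card = a0 := by
  have : (univ : Finset (Fin m)).filter (fun a => a.val < a0)
      = (Finset.range a0).attachFin (fun x hx => lt_of_lt_of_le (Finset.mem_range.mp hx) h) := by
    ext a
    simp [Finset.mem_attachFin]
  rw [this, Finset.card_attachFin, Finset.card_range]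

lemma construct (m n a0 b0 : ℕ) (q : ℕ → ℕ) (ha : a0 ≤ m) (hb : b0 ≤ n)
    (hE : a0 + b0 ≤ (((Finset.range (m + n + 1)).filter (fun k => q k = 0))).card)
    (hO : (m - a0) + (n - b0) ≤ (((Finset.range (m + n + 1)).filter (fun k => q k = 1))).card) :
    ∃ f : Fin m ⊕ Fin n → Fin (m + n + 1), Function.Injective f ∧
      ((univ : Finset (Fin m)).filter (fun a => q ((f (Sum.inl a)).val) = 0)).card = a0 ∧
      ((univ : Finset (Fin n)).filter (fun b => q ((f (Sum.inr b)).val) = 0)).card = b0 := by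
  classical
  set Ev := (Finset.range (m + n + 1)).filter (fun k => q k = 0) with hEv
  set Od := (Finset.range (m + n + 1)).filter (fun k => q k = 1) with hOd
  set E := Ev.card with hEc
  set O := Od.card with hOc
  obtain ⟨gE, hgE⟩ : ∃ g : Fin E ↪o ℕ, ∀ i, g i ∈ Ev :=
    ⟨Ev.orderEmbOfFin rfl, fun i => Ev.orderEmbOfFin_mem rfl i⟩
  obtain ⟨gO, hgO⟩ : ∃ g : Fin O ↪o ℕ, ∀ j, g j ∈ Od :=
    ⟨Od.orderEmbOfFin rfl, fun j => Od.orderEmbOfFin_mem rfl j⟩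
  have hgElt : ∀ i, gE i < m + n + 1 := fun i => Finset.mem_range.mp (Finset.mem_filter.mp (hgE i)).1
  have hgOlt : ∀ j, gO j < m + n + 1 := fun j => Finset.mem_range.mp (Finset.mem_filter.mp (hgO j)).1
  have hgE0 : ∀ i, q (gE i) = 0 := fun i => (Finset.mem_filter.mp (hgE i)).2
  have hgO1 : ∀ j, q (gO j) = 1 := fun j => (Finset.mem_filter.mp (hgO j)).2
  set g : Fin m ⊕ Fin n → Fin E ⊕ Fin O := Sum.elim
    (fun a => if h : a.val < a0 then Sum.inl ⟨a.val, by omega⟩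
              else Sum.inr ⟨a.val - a0, by have := a.isLt; omega⟩)
    (fun b => if h : b.val < b0 then Sum.inl ⟨a0 + b.val, by omega⟩
              else Sum.inr ⟨(m - a0) + (b.val - b0), by have := b.isLt; omega⟩) with hg
  set F : Fin E ⊕ Fin O → ℕ := Sum.elim (fun i => gE i) (fun j => gO j) with hF
  have hFlt : ∀ x, F x < m + n + 1 := by rintro (i | j) <;> simp [hF, hgElt, hgOlt]
  refine ⟨fun v => ⟨F (g v), hFlt _⟩, ?_, ?_, ?_⟩
  · -- injectivity
    have hFinj : Function.Injective F := by
      rintro (i | j) (i' | j') h <;> simp only [hF, Sum.elim_inl, Sum.elim_inr] at h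
      · exact congrArg Sum.inl (gE.injective h)
      · exact absurd (hgE0 i) (by rw [h, hgO1]; omega)
      · exact absurd (hgO1 j) (by rw [h, hgE0]; omega)
      · exact congrArg Sum.inr (gO.injective h)
    have hginj : Function.Injective g := by
      rintro (a | b) (a' | b') h <;>
        simp only [hg, Sum.elim_inl, Sum.elim_inr] at h
      · split_ifs at h with h1 h2
        · exact congrArg Sum.inl (Fin.ext (by simpa [Fin.mk.injEq] using h))
        · have hv : a.val - a0 = a'.val - a0 := by simpa [Fin.mk.injEq] using h
          exact congrArg Sum.inl (Fin.ext (by omega))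
      · split_ifs at h with h1 h2
        · exact absurd (show a.val = a0 + b'.val by simpa [Fin.mk.injEq] using h) (by omega)
        · exact absurd (show a.val - a0 = (m - a0) + (b'.val - b0) by
            simpa [Fin.mk.injEq] using h) (by have := a.isLt; have := b'.isLt; omega)
      · split_ifs at h with h1 h2
        · exact absurd (show a0 + b.val = a'.val by simpa [Fin.mk.injEq] using h) (by omega)
        · exact absurd (show (m - a0) + (b.val - b0) = a'.val - a0 by
            simpa [Fin.mk.injEq] using h) (by have := a'.isLt; have := b.isLt; omega)
      · split_ifs at h with h1 h2
        · have hv : a0 + b.val = a0 + b'.val := by simpa [Fin.mk.injEq] using h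
          exact congrArg Sum.inr (Fin.ext (by omega))
        · have hv : (m - a0) + (b.val - b0) = (m - a0) + (b'.val - b0) := by
            simpa [Fin.mk.injEq] using h
          exact congrArg Sum.inr (Fin.ext (by omega))
    intro v w h
    exact hginj (hFinj (by simpa [Fin.mk.injEq] using h))
  · have : ∀ a : Fin m, (q (F (g (Sum.inl a))) = 0) ↔ a.val < a0 := by
      intro a
      simp only [hg, Sum.elim_inl]
      split_ifs with h
      · simp [hF, hgE0, h]
      · simp [hF, hgO1, h]
    simp only [this]
    exact card_filter_val_lt m a0 ha
  · have : ∀ b : Fin n, (q (F (g (Sum.inr b))) = 0) ↔ b.val < b0 := by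
      intro b
      simp only [hg, Sum.elim_inr]
      split_ifs with h
      · simp [hF, hgE0, h]
      · simp [hF, hgO1, h]
    simp only [this]
    exact card_filter_val_lt n b0 hb

lemma arith : ∀ N ∈ Finset.range 41, N % 2 = 0 → 2 ≤ N →
    ((N % 7 = 0 ∧ N ≤ 28) ∨ (N % 7 = 1 ∧ N ≤ 22) ∨ (N % 7 = 2 ∧ N ≤ 30) ∨
     (N % 7 = 3 ∧ N ≤ 38) ∨ (N % 7 = 4 ∧ N ≤ 32) ∨ (N % 7 = 5 ∧ N ≤ 40) ∨
     (N % 7 = 6 ∧ N ≤ 34)) →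
    (N / 2 ≤ ((Finset.range (N + 1)).filter (fun k => perrin k % 2 = 0)).card + 1 ∧
     ((Finset.range (N + 1)).filter (fun k => perrin k % 2 = 0)).card ≤ N / 2 + 2) := by
  decide

lemma mod_two_le (k : ℕ) : perrin k % 2 ≤ 1 := Nat.le_of_lt_succ (Nat.mod_lt _ (by norm_num))

lemma diff_eq (m n : ℕ) (f : Fin m ⊕ Fin n → ℕ) (a0 b0 : ℕ) (ha : a0 ≤ m) (hb : b0 ≤ n)
    (hA : ((univ : Finset (Fin m)).filter (fun a => perrin (f (Sum.inl a)) % 2 = 0)).card = a0)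
    (hB : ((univ : Finset (Fin n)).filter (fun b => perrin (f (Sum.inr b)) % 2 = 0)).card = b0) :
    (eCount (completeBipartiteGraph (Fin m) (Fin n)) f 0 : ℤ)
      - (eCount (completeBipartiteGraph (Fin m) (Fin n)) f 1 : ℤ)
    = ((2 * a0 : ℤ) - m) * ((2 * b0 : ℤ) - n) := by
  classical
  set gA : Fin m → ℕ := fun a => perrin (f (Sum.inl a)) % 2 with hgA
  set gB : Fin n → ℕ := fun b => perrin (f (Sum.inr b)) % 2 with hgB
  have hqA : ∀ a, gA a ≤ 1 := fun a => mod_two_le _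
  have hqB : ∀ b, gB b ≤ 1 := fun b => mod_two_le _
  have hA1 : ((univ : Finset (Fin m)).filter (fun a => gA a = 1)).card = m - a0 := by
    have h1 := Finset.card_filter_add_card_filter_not
      (s := (univ : Finset (Fin m))) (p := fun a => gA a = 0)
    have h2 : (univ : Finset (Fin m)).filter (fun a => ¬ gA a = 0)
        = (univ : Finset (Fin m)).filter (fun a => gA a = 1) := by
      apply Finset.filter_congr
      intro a _
      have := hqA a
      constructor <;> intro <;> omega
    rw [h2] at h1
    rw [hA] at h1
    simp only [Finset.card_univ, Fintype.card_fin] at h1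
    omega
  have hB1 : ((univ : Finset (Fin n)).filter (fun b => gB b = 1)).card = n - b0 := by
    have h1 := Finset.card_filter_add_card_filter_not
      (s := (univ : Finset (Fin n))) (p := fun b => gB b = 0)
    have h2 : (univ : Finset (Fin n)).filter (fun b => ¬ gB b = 0)
        = (univ : Finset (Fin n)).filter (fun b => gB b = 1) := by
      apply Finset.filter_congr
      intro b _
      have := hqB b
      constructor <;> intro <;> omega
    rw [h2] at h1
    rw [hB] at h1
    simp only [Finset.card_univ, Fintype.card_fin] at h1
    omega
  obtain ⟨P0, P1⟩ := pair_count gA gB hqA hqB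
  have e0 : eCount (completeBipartiteGraph (Fin m) (Fin n)) f 0
      = a0 * b0 + (m - a0) * (n - b0) := by
    rw [eCount_eq]
    have : (univ : Finset (Fin m × Fin n)).filter
        (fun ab => (perrin (f (.inl ab.1)) + perrin (f (.inr ab.2))) % 2 = 0)
      = (univ : Finset (Fin m × Fin n)).filter (fun ab => gA ab.1 = gB ab.2) := by
      apply Finset.filter_congr
      rintro ⟨a, b⟩ _
      have h1 := hqA a
      have h2 := hqB b
      simp only [hgA, hgB] at *
      rw [Nat.add_mod]
      constructor <;> intro <;> omega
    rw [this, P0, hA, hB, hA1, hB1]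
  have e1 : eCount (completeBipartiteGraph (Fin m) (Fin n)) f 1
      = a0 * (n - b0) + (m - a0) * b0 := by
    rw [eCount_eq]
    have : (univ : Finset (Fin m × Fin n)).filter
        (fun ab => (perrin (f (.inl ab.1)) + perrin (f (.inr ab.2))) % 2 = 1)
      = (univ : Finset (Fin m × Fin n)).filter (fun ab => gA ab.1 ≠ gB ab.2) := by
      apply Finset.filter_congr
      rintro ⟨a, b⟩ _
      have h1 := hqA a
      have h2 := hqB b
      simp only [hgA, hgB] at *
      rw [Nat.add_mod]
      constructor <;> intro <;> omega
    rw [this, P1, hA, hB, hA1, hB1]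
  rw [e0, e1]
  push_cast [ha, hb]
  ring

/-- for odd positive `m`, `n`, the graph `K_{m,n}` is Perrin cordial if one of
the listed conditions on `m + n` modulo `7` holds. -/
theorem completeBipartiteGraph_isPerrinCordial_of_odd_odd (m n : ℕ)
    (hm : 0 < m) (hn : 0 < n) (hmo : Odd m) (hno : Odd n)
    (h : ((m + n) % 7 = 0 ∧ m + n ≤ 28) ∨
         ((m + n) % 7 = 1 ∧ m + n ≤ 22) ∨
         ((m + n) % 7 = 2 ∧ m + n ≤ 30) ∨
         ((m + n) % 7 = 3 ∧ m + n ≤ 38) ∨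
         ((m + n) % 7 = 4 ∧ m + n ≤ 32) ∨
         ((m + n) % 7 = 5 ∧ m + n ≤ 40) ∨
         ((m + n) % 7 = 6 ∧ m + n ≤ 34)) :
    IsPerrinCordial (completeBipartiteGraph (Fin m) (Fin n)) := by
  classical
  obtain ⟨p, hp⟩ := hmo
  obtain ⟨q, hq⟩ := hno
  have hNlt : m + n < 41 := by omega
  obtain ⟨hElow, hEhigh⟩ := arith (m + n) (Finset.mem_range.mpr hNlt) (by omega) (by omega) h
  set E := ((Finset.range (m + n + 1)).filter (fun k => perrin k % 2 = 0)).card with hE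
  have hEO : E + ((Finset.range (m + n + 1)).filter (fun k => perrin k % 2 = 1)).card
      = m + n + 1 := by
    have h1 := Finset.card_filter_add_card_filter_not
      (s := Finset.range (m + n + 1)) (p := fun k => perrin k % 2 = 0)
    have h2 : (Finset.range (m + n + 1)).filter (fun k => ¬ perrin k % 2 = 0)
        = (Finset.range (m + n + 1)).filter (fun k => perrin k % 2 = 1) := by
      apply Finset.filter_congr
      intro k _
      have := mod_two_le k
      constructor <;> intro <;> omega
    rw [h2] at h1
    rw [Finset.card_range] at h1
    omega
  -- choose a0 b0
  have hdiv : (m + n) / 2 = p + q + 1 := by omega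
  rw [hdiv] at hElow hEhigh
  obtain ⟨a0, b0, ha, hb, hEc, hOc, hbal⟩ :
      ∃ a0 b0 : ℕ, a0 ≤ m ∧ b0 ≤ n ∧ a0 + b0 ≤ E ∧
        (m - a0) + (n - b0) ≤ ((Finset.range (m + n + 1)).filter (fun k => perrin k % 2 = 1)).card ∧
        (((2 * a0 : ℤ) - m) * ((2 * b0 : ℤ) - n) = 1 ∨
         ((2 * a0 : ℤ) - m) * ((2 * b0 : ℤ) - n) = -1) := by
    rcases Nat.lt_or_ge E (p + q + 1) with hc | hc
    · -- E = p + q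
      refine ⟨p, q, by omega, by omega, by omega, by omega, Or.inl ?_⟩
      have h1 : (2 * (p : ℤ) - m) = -1 := by push_cast; omega
      have h2 : (2 * (q : ℤ) - n) = -1 := by push_cast; omega
      rw [h1, h2]; ring
    · rcases Nat.lt_or_ge E (p + q + 2) with hc2 | hc2
      · -- E = p + q + 1
        refine ⟨p + 1, q, by omega, by omega, by omega, by omega, Or.inr ?_⟩
        have h1 : (2 * ((p : ℤ) + 1) - m) = 1 := by push_cast; omega
        have h2 : (2 * (q : ℤ) - n) = -1 := by push_cast; omega
        push_cast
        rw [show 2 * ((p : ℤ) + 1) - m = 1 by omega, show 2 * (q : ℤ) - n = -1 by omega]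
        ring
      · -- E ≥ p + q + 2
        refine ⟨p + 1, q + 1, by omega, by omega, by omega, by omega, Or.inl ?_⟩
        push_cast
        rw [show 2 * ((p : ℤ) + 1) - m = 1 by omega, show 2 * ((q : ℤ) + 1) - n = 1 by omega]
        ring
  obtain ⟨f, hfinj, hfA, hfB⟩ := construct m n a0 b0 (fun k => perrin k % 2) ha hb hEc hOc
  rw [IsPerrinCordial]
  have hcard : Fintype.card (Fin m ⊕ Fin n) = m + n := by simp
  rw [hcard]
  refine ⟨f, hfinj, ?_⟩
  rw [diff_eq m n (fun v => (f v : ℕ)) a0 b0 ha hb hfA hfB]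
  rcases hbal with h1 | h1 <;> rw [h1] <;> norm_num
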